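/- Let p be a prime, A a commutative ring and 𝔞 ⊆ A a nilpotent ideal with p·1 ∈ 𝔞. Let M be a module over W(A) such that every element of M is a finite sum Σ wᵢ·mᵢ with wᵢ ∈ W(𝔞) and mᵢ ∈ M (i.e. M = W(𝔞)·M), and let φ : M → M be an additive map that is Frobenius-semilinear: φ(w·m) = f(w)·φ(m) for all w ∈ W(A), m ∈ M. Then id − φ : M → M is bijective. -/
import Mathlib

open MvPolynomial Finset

lemma constantCoeff_frobeniusPolyAux (p : ℕ) [hp : Fact p.Prime] (n : ℕ) :
    MvPolynomial.constantCoeff (WittVector.frobeniusPolyAux p n) = 0 := by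
  induction n using Nat.strong_induction_on with
  | _ n ih =>
    rw [WittVector.frobeniusPolyAux_eq, map_sub, constantCoeff_X, zero_sub, map_sum,
      Finset.sum_eq_zero, neg_zero]
    intro i hi
    rw [map_sum, Finset.sum_eq_zero]
    intro j _
    simp only [map_mul, map_pow]
    rw [ih i (Finset.mem_range.1 hi), zero_pow (Nat.succ_ne_zero j), mul_zero, zero_mul]

lemma aeval_mem_of_constantCoeff_zero {A : Type*} [CommRing A] (I : Ideal A)
    (P : MvPolynomial ℕ ℤ) (hP : MvPolynomial.constantCoeff P = 0)
    (x : ℕ → A) (hx : ∀ n, x n ∈ I) : MvPolynomial.aeval x P ∈ I := by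
  rw [← Ideal.Quotient.eq_zero_iff_mem, MvPolynomial.map_aeval]
  have hx0 : (fun i => Ideal.Quotient.mk I (x i)) = (0 : ℕ → A ⧸ I) :=
    funext fun i => Ideal.Quotient.eq_zero_iff_mem.2 (hx i)
  rw [hx0, MvPolynomial.eval₂Hom_zero_apply, hP, map_zero]

lemma frobenius_coeff_mem (p : ℕ) [Fact p.Prime] {A : Type*} [CommRing A] {𝔞 : Ideal A}
    (hp : (p : A) ∈ 𝔞) (j : ℕ) (hj : 1 ≤ j) (w : WittVector p A)
    (hw : ∀ n, w.coeff n ∈ 𝔞 ^ j) (n : ℕ) :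
    (WittVector.frobenius w).coeff n ∈ 𝔞 ^ (j + 1) := by
  rw [WittVector.coeff_frobenius]
  have hpoly : WittVector.frobeniusPoly p n
      = X n ^ p + C (p : ℤ) * WittVector.frobeniusPolyAux p n := rfl
  rw [hpoly, map_add, map_pow, aeval_X, map_mul, aeval_C]
  apply Ideal.add_mem
  · have h1 : w.coeff n ^ p ∈ (𝔞 ^ j) ^ p := Ideal.pow_mem_pow (hw n) p
    rw [← pow_mul] at h1
    refine Ideal.pow_le_pow_right ?_ h1
    have hp2 : 2 ≤ p := (Fact.out : p.Prime).two_le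
    calc j + 1 ≤ j + j := by omega
    _ = j * 2 := by ring
    _ ≤ j * p := Nat.mul_le_mul_left j hp2
  · have h2 : MvPolynomial.aeval w.coeff (WittVector.frobeniusPolyAux p n) ∈ 𝔞 ^ j :=
      aeval_mem_of_constantCoeff_zero _ _ (constantCoeff_frobeniusPolyAux p n) _ hw
    have h3 : (algebraMap ℤ A) (p : ℤ) = (p : A) := by simp
    rw [h3, pow_succ']
    exact Ideal.mul_mem_mul hp h2

lemma frobenius_iterate_eq_zero (p : ℕ) [Fact p.Prime] {A : Type*} [CommRing A] {𝔞 : Ideal A}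
    {N : ℕ} (hN : 𝔞 ^ N = ⊥) (hp : (p : A) ∈ 𝔞) (w : WittVector p A)
    (hw : ∀ n, w.coeff n ∈ 𝔞) : (WittVector.frobenius (p := p))^[N] w = 0 := by
  have key : ∀ k, ∀ n, ((WittVector.frobenius (p := p))^[k] w).coeff n ∈ 𝔞 ^ (k + 1) := by
    intro k
    induction k with
    | zero => intro n; simpa using hw n
    | succ k ih =>
      intro n
      rw [Function.iterate_succ_apply']
      exact frobenius_coeff_mem p hp (k + 1) (Nat.le_add_left 1 k) _ ih n
  ext n
  have h1 := key N n
  have h2 : 𝔞 ^ (N + 1) ≤ 𝔞 ^ N := Ideal.pow_le_pow_right (Nat.le_succ N)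
  rw [hN] at h2
  simpa using h2 h1

/-- Let `p` be a prime, `A` a commutative ring and `𝔞 ⊆ A` a nilpotent
ideal with `p·1 ∈ 𝔞`.  Let `M` be a `W(A)`-module with `M = W(𝔞)·M` (every element is a
finite sum `Σ wᵢ·mᵢ` with all components of each `wᵢ` in `𝔞`), and let `φ : M → M` be an
additive Frobenius-semilinear map.  Then `id − φ` is bijective. -/
theorem sub_semilinear_bijective
    (p : ℕ) [Fact p.Prime] (A : Type*) [CommRing A] (𝔞 : Ideal A)
    (N : ℕ) (hN : 𝔞 ^ N = ⊥) (hp : (p : A) ∈ 𝔞)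
    (M : Type*) [AddCommGroup M] [Module (WittVector p A) M]
    (hM : ∀ m : M, ∃ (n : ℕ) (w : Fin n → WittVector p A) (x : Fin n → M),
      (∀ i j, (w i).coeff j ∈ 𝔞) ∧ m = ∑ i, w i • x i)
    (φ : M →+ M)
    (hφ : ∀ (w : WittVector p A) (m : M), φ (w • m) = WittVector.frobenius w • φ m) :
    Function.Bijective (fun m : M => m - φ m) := by
  -- iterates of φ are semilinear over iterates of frobenius
  have hiter : ∀ k (w : WittVector p A) (x : M),
      (⇑φ)^[k] (w • x) = ((WittVector.frobenius (p := p))^[k] w) • (⇑φ)^[k] x := by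
    intro k
    induction k with
    | zero => intro w x; simp
    | succ k ih =>
      intro w x
      rw [Function.iterate_succ_apply', Function.iterate_succ_apply',
        Function.iterate_succ_apply', ih, hφ]
  have hadd : ∀ k (a b : M), (⇑φ)^[k] (a + b) = (⇑φ)^[k] a + (⇑φ)^[k] b := by
    intro k
    induction k with
    | zero => intro a b; simp
    | succ k ih =>
      intro a b
      rw [Function.iterate_succ_apply', Function.iterate_succ_apply',
        Function.iterate_succ_apply', ih, map_add]
  -- φ^[N] = 0
  have hnil : ∀ m : M, (⇑φ)^[N] m = 0 := by
    intro m
    obtain ⟨n, w, x, hw, rfl⟩ := hM m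
    have hsum : (⇑φ)^[N] (∑ i, w i • x i) = ∑ i, (⇑φ)^[N] (w i • x i) :=
      map_sum (AddMonoidHom.mk' ((⇑φ)^[N]) (hadd N)) _ _
    rw [hsum]
    apply Finset.sum_eq_zero
    intro i _
    rw [hiter, frobenius_iterate_eq_zero p hN hp (w i) (hw i), zero_smul]
  constructor
  · -- injective
    intro a b hab
    dsimp only at hab
    have h1 : a - b = φ (a - b) := by
      rw [map_sub]
      have := sub_eq_sub_iff_sub_eq_sub.1 hab
      linear_combination (norm := abel) this
    have h2 : ∀ k, a - b = (⇑φ)^[k] (a - b) := by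
      intro k
      induction k with
      | zero => simp
      | succ k ih => rw [Function.iterate_succ_apply', ← ih]; exact h1
    have h3 := h2 N
    rw [hnil] at h3
    exact sub_eq_zero.1 h3
  · -- surjective
    intro y
    refine ⟨∑ k ∈ Finset.range N, (⇑φ)^[k] y, ?_⟩
    dsimp only
    rw [map_sum]
    have hstep : ∀ k, φ ((⇑φ)^[k] y) = (⇑φ)^[k + 1] y := fun k =>
      (Function.iterate_succ_apply' (⇑φ) k y).symm
    calc ∑ k ∈ Finset.range N, (⇑φ)^[k] y - ∑ k ∈ Finset.range N, φ ((⇑φ)^[k] y)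
        = ∑ k ∈ Finset.range N, ((⇑φ)^[k] y - (⇑φ)^[k + 1] y) := by
          rw [Finset.sum_sub_distrib]
          congr 1
          exact Finset.sum_congr rfl fun k _ => by rw [hstep]
      _ = (⇑φ)^[0] y - (⇑φ)^[N] y := Finset.sum_range_sub' _ _
      _ = y := by rw [hnil, Function.iterate_zero_apply, sub_zero]
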